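/- Let 𝔜 be a (possibly noncommutative) Noetherian domain which is a free module over its center Z(𝔜), with the property that every two-sided ideal of 𝔜 is generated by its intersection with Z(𝔜). Let 𝔍 be a proper two-sided ideal of 𝔜. Then ⋂_{m=1}^{∞} 𝔍ᵐ = 0. -/

import Mathlib

/-- The `m`-th power of a (two-sided) ideal `J` of a possibly noncommutative ring,
as the left ideal generated by `m`-fold products of elements of `J`. -/
def idealPowNC {R : Type*} [Ring R] (J : Ideal R) : ℕ → Ideal R
  | 0 => ⊤
  | m + 1 => Ideal.span {x : R | ∃ a ∈ J, ∃ b ∈ idealPowNC J m, x = a * b}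

namespace KrullNCAux

variable {Y : Type*} [Ring Y] {ι : Type*} {b : ι → Y}

local notation "Z" => Subring.center Y

theorem center_comm (z : Z) (y : Y) : (z : Y) * y = y * z :=
  (Subring.mem_center_iff.mp z.2 y).symm

/-- Representability with coefficients in the center (as a subtype-valued finsupp). -/
def HRep (b : ι → Y) : Prop :=
  ∀ v : Y, ∃ c : ι →₀ Z, v = c.sum fun i ci => (ci : Y) * b i

/-- Uniqueness of central coefficients. -/
def HUniq (b : ι → Y) : Prop :=
  ∀ c c' : ι →₀ Z, (c.sum fun i ci => (ci : Y) * b i) = (c'.sum fun i ci => (ci : Y) * b i) →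
    c = c'

/-- The left ideal of elements whose central coefficients all lie in `I`. -/
def Tid (hrep : HRep b) (I : Ideal Z) : Ideal Y where
  carrier := {v | ∃ c : ι →₀ Z, (∀ i, c i ∈ I) ∧ v = c.sum fun i ci => (ci : Y) * b i}
  zero_mem' := ⟨0, fun i => by simp, by simp⟩
  add_mem' := by
    rintro x y ⟨c, hc, rfl⟩ ⟨d, hd, rfl⟩
    refine ⟨c + d, fun i => by simpa using I.add_mem (hc i) (hd i), ?_⟩
    rw [Finsupp.sum_add_index' (fun i => by simp) (fun i x y => by push_cast; rw [add_mul])]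
  smul_mem' := by
    rintro y x ⟨c, hc, rfl⟩
    choose e he using fun i => hrep (y * b i)
    refine ⟨c.sum fun i ci => ci • e i, fun j => ?_, ?_⟩
    · rw [Finsupp.sum_apply]
      refine Ideal.sum_mem _ fun i hi => ?_
      show (c i • e i) j ∈ I
      rw [Finsupp.smul_apply, smul_eq_mul]
      exact Ideal.mul_mem_right _ _ (hc i)
    · rw [smul_eq_mul, Finsupp.mul_sum]
      conv_rhs => rw [show (c.sum fun i ci => ci • e i) = ∑ i ∈ c.support, c i • e i from rfl]
      rw [← Finsupp.sum_finsetSum_index (fun i => by simp) (fun i x y => by push_cast; rw [add_mul])]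
      refine Finset.sum_congr rfl fun i _ => ?_
      rw [Finsupp.sum_smul_index' (fun j => by simp)]
      show y * ((c i : Y) * b i) = _
      have hcomm : y * ((c i : Y) * b i) = (c i : Y) * (y * b i) := by
        rw [← mul_assoc, ← center_comm (c i) y, mul_assoc]
      rw [hcomm, he i, Finsupp.mul_sum]
      exact Finsupp.sum_congr fun j _ => by rw [smul_eq_mul]; push_cast; rw [← mul_assoc]

theorem mem_Tid_top (hrep : HRep b) (v : Y) : v ∈ Tid hrep (⊤ : Ideal Z) := by
  obtain ⟨c, hc⟩ := hrep v
  exact ⟨c, fun i => trivial, hc⟩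

theorem scale_mem_Tid (hrep : HRep b) {I₀ I₁ : Ideal Z} {z : Z} (hz : z ∈ I₀) {x : Y}
    (hx : x ∈ Tid hrep I₁) : (z : Y) * x ∈ Tid hrep (I₀ * I₁) := by
  obtain ⟨c, hc, rfl⟩ := hx
  refine ⟨z • c, fun i => ?_, ?_⟩
  · rw [Finsupp.smul_apply, smul_eq_mul]
    exact Ideal.mul_mem_mul hz (hc i)
  · rw [Finsupp.mul_sum, Finsupp.sum_smul_index' (fun j => by simp)]
    exact Finsupp.sum_congr fun j _ => by rw [smul_eq_mul]; push_cast; rw [← mul_assoc]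

theorem mul_mem_Tid (hrep : HRep b) {I₀ I₁ : Ideal Z} {v w : Y}
    (hv : v ∈ Tid hrep I₀) (hw : w ∈ Tid hrep I₁) : v * w ∈ Tid hrep (I₀ * I₁) := by
  obtain ⟨c, hc, rfl⟩ := hv
  rw [Finsupp.sum_mul]
  refine Submodule.sum_mem _ fun i hi => ?_
  show (c i : Y) * b i * w ∈ _
  rw [mul_assoc]
  exact scale_mem_Tid hrep (hc i) ((Tid hrep I₁).smul_mem (b i) hw)

end KrullNCAux

open KrullNCAux in
/-- Let `𝔜` be a (possibly noncommutative) Noetherian domain which is free as a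
module over its center (witnessed by a basis `b : ι → 𝔜` with unique central
coefficients), such that every two-sided ideal of `𝔜` is generated by its
intersection with the center.  Then for every proper two-sided ideal `J`,
`⋂_{m ≥ 1} Jᵐ = 0`. -/
theorem krull_intersection_noncommutative {Y : Type*} [Ring Y] [IsDomain Y]
    [IsNoetherianRing Y]
    (ι : Type*) (b : ι → Y)
    (hrepr : ∀ v : Y, ∃ c : ι →₀ Y, (∀ i, c i ∈ Subring.center Y) ∧
      v = c.sum fun i ci => ci * b i)
    (hfree : ∀ c : ι →₀ Y, (∀ i, c i ∈ Subring.center Y) →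
      (c.sum fun i ci => ci * b i) = 0 → c = 0)
    (hideals : ∀ I : Ideal Y, (∀ a ∈ I, ∀ r : Y, a * r ∈ I) →
      I = Ideal.span ((I : Set Y) ∩ (Subring.center Y : Set Y)))
    (J : Ideal Y) (hJ2 : ∀ a ∈ J, ∀ r : Y, a * r ∈ J) (hJ : J ≠ ⊤) :
    ∀ v : Y, (∀ m : ℕ, v ∈ idealPowNC J m) → v = 0 := by
  classical
  set Z := Subring.center Y with hZ
  -- Subtype-valued representability
  have hrep : HRep b := by
    intro v
    obtain ⟨c, hcent, hv⟩ := hrepr v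
    refine ⟨⟨c.support, fun i => ⟨c i, hcent i⟩, fun i => by
      simp [Finsupp.mem_support_iff, Subtype.ext_iff]⟩, ?_⟩
    rw [hv]; rfl
  -- Uniqueness of subtype-valued representations
  have huniq : HUniq b := by
    intro c c' h
    have key : Finsupp.mapRange (Subtype.val) rfl (c - c') = 0 := by
      refine hfree _ (fun i => by rw [Finsupp.mapRange_apply]; exact ((c - c') i).2) ?_
      rw [Finsupp.sum_mapRange_index (fun i => by simp)]
      have : ((c - c').sum fun i ci => (ci : Y) * b i)
          = (c.sum fun i ci => (ci : Y) * b i) - (c'.sum fun i ci => (ci : Y) * b i) := by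
        rw [Finsupp.sum_sub_index (fun i x y => by push_cast; rw [sub_mul])]
      rw [this, h, sub_self]
    have key' : Finsupp.mapRange (Subtype.val) rfl (c - c')
        = Finsupp.mapRange (Subtype.val) rfl (0 : ι →₀ ↥(Subring.center Y)) := by
      rw [Finsupp.mapRange_zero]; exact key
    have := Finsupp.mapRange_injective (Subtype.val) rfl Subtype.val_injective key'
    exact sub_eq_zero.mp this
  -- J is spanned by central elements
  have hJspan : J = Ideal.span ((J : Set Y) ∩ (Z : Set Y)) := hideals J hJ2
  set J₀ : Ideal ↥Z := J.comap (Subring.center Y).subtype with hJ₀def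
  have hJT : J ≤ Tid hrep J₀ := by
    conv_lhs => rw [hJspan]
    rw [Ideal.span_le]
    rintro x ⟨hxJ, hxZ⟩
    have h1 : (1 : Y) ∈ Tid hrep (⊤ : Ideal ↥Z) := mem_Tid_top hrep 1
    have hsc := scale_mem_Tid hrep (I₀ := J₀) (z := ⟨x, hxZ⟩)
      (show (⟨x, hxZ⟩ : ↥Z) ∈ J₀ from hxJ) h1
    simpa [Ideal.mul_top] using hsc
  -- powers
  have hpow : ∀ m : ℕ, idealPowNC J m ≤ Tid hrep (J₀ ^ m) := by
    intro m
    induction m with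
    | zero =>
      intro v _
      simpa [pow_zero, Ideal.one_eq_top] using mem_Tid_top hrep v
    | succ m ih =>
      show Ideal.span _ ≤ _
      rw [Ideal.span_le]
      rintro x ⟨a, ha, w, hw, rfl⟩
      have := mul_mem_Tid hrep (hJT ha) (ih hw)
      rw [pow_succ']
      exact this
  -- coefficients of 1
  obtain ⟨u, hu⟩ := hrep 1
  have hne : Nonempty ι := by
    by_contra h
    have hu0 : u = 0 := by ext i; exact (h ⟨i⟩).elim
    rw [hu0, Finsupp.sum_zero_index] at hu
    exact one_ne_zero hu
  -- the coefficients of 1 generate the unit ideal of the center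
  have huspan : Ideal.span (Set.range u) = (⊤ : Ideal ↥Z) := by
    by_contra hne'
    obtain ⟨M, hMmax, hM⟩ := Ideal.exists_le_maximal _ hne'
    have h1 : (1 : Y) ∈ Tid hrep M := ⟨u, fun i => hM (Ideal.subset_span ⟨i, rfl⟩), hu⟩
    obtain ⟨i₀⟩ := hne
    have hb : b i₀ ∈ Tid hrep M := by
      simpa using (Tid hrep M).smul_mem (b i₀) h1
    obtain ⟨c, hc, hbc⟩ := hb
    have hcs : c = Finsupp.single i₀ 1 := by
      refine huniq _ _ ?_
      rw [← hbc, Finsupp.sum_single_index (by simp)]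
      simp
    have : (1 : ↥Z) ∈ M := by
      have := hc i₀
      rwa [hcs, Finsupp.single_eq_same] at this
    exact hMmax.ne_top ((Ideal.eq_top_iff_one _).mpr this)
  -- pulling back membership in Tid to the center
  have hcomap : ∀ (I : Ideal ↥Z) (z : ↥Z), (z : Y) ∈ Tid hrep I → z ∈ I := by
    intro I z hz
    obtain ⟨c, hc, hzc⟩ := hz
    have hrepz : (z : Y) = (z • u).sum fun i ci => (ci : Y) * b i := by
      rw [Finsupp.sum_smul_index' (fun j => by simp)]
      calc (z : Y) = (z : Y) * 1 := (mul_one _).symm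
        _ = (z : Y) * u.sum fun i ci => (ci : Y) * b i := by rw [← hu]
        _ = u.sum fun i ci => ((z • ci : ↥Z) : Y) * b i := by
            rw [Finsupp.mul_sum]
            exact Finsupp.sum_congr fun j _ => by rw [smul_eq_mul]; push_cast; rw [← mul_assoc]
    have hceq : c = z • u := huniq _ _ (by rw [← hzc, ← hrepz])
    have hzu : ∀ i, z * u i ∈ I := by
      intro i
      have := hc i
      rwa [hceq, Finsupp.smul_apply, smul_eq_mul] at this
    have h1 : (1 : ↥Z) ∈ Ideal.span (Set.range u) := by rw [huspan]; trivial
    have : z * 1 ∈ I := by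
      refine Submodule.span_induction (p := fun x _ => z * x ∈ I) ?_ ?_ ?_ ?_ h1
      · rintro x ⟨i, rfl⟩; exact hzu i
      · simp
      · intro x y _ _ hx hy; rw [mul_add]; exact I.add_mem hx hy
      · intro a x _ hx
        rw [smul_eq_mul, ← mul_assoc, mul_comm z a, mul_assoc]
        exact I.smul_mem a hx
    rwa [mul_one] at this
  -- the center is Noetherian
  have hiff : ∀ I I' : Ideal ↥Z, Tid hrep I ≤ Tid hrep I' ↔ I ≤ I' := by
    intro I I'
    constructor
    · intro h z hz
      refine hcomap I' z (h ?_)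
      have hsc := scale_mem_Tid hrep (I₀ := I) hz (mem_Tid_top hrep 1)
      simpa [Ideal.mul_top] using hsc
    · rintro h x ⟨c, hc, rfl⟩
      exact ⟨c, fun i => h (hc i), rfl⟩
  haveI hZnoeth : IsNoetherianRing ↥Z := by
    rw [isNoetherianRing_iff, isNoetherian_iff]
    have hwf : WellFounded ((· > ·) : Ideal Y → Ideal Y → Prop) :=
      isNoetherian_iff.mp inferInstance
    let f : ((· > ·) : Ideal ↥Z → Ideal ↥Z → Prop) ↪r
        ((· > ·) : Ideal Y → Ideal Y → Prop) :=
      { toFun := Tid hrep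
        inj' := fun I I' h =>
          le_antisymm ((hiff I I').mp h.le) ((hiff I' I).mp h.ge)
        map_rel_iff' := by
          intro I I'
          simp only [Function.Embedding.coeFn_mk, gt_iff_lt, lt_iff_le_not_ge, hiff]
          exact and_congr (hiff I' I) (not_congr (hiff I I')) }
    exact f.wellFounded hwf
  -- J₀ is proper
  have hJ₀top : J₀ ≠ ⊤ := by
    intro htop
    refine hJ ((Ideal.eq_top_iff_one _).mpr ?_)
    have : (1 : ↥Z) ∈ J₀ := htop ▸ trivial
    exact this
  have hkrull : (⨅ m : ℕ, J₀ ^ m) = ⊥ := J₀.iInf_pow_eq_bot_of_isDomain hJ₀top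
  -- conclusion
  intro v hv
  obtain ⟨cv, hcv⟩ := hrep v
  have hcoef : ∀ i, cv i = 0 := by
    intro i
    have hmem : ∀ m : ℕ, cv i ∈ J₀ ^ m := by
      intro m
      obtain ⟨c, hc, hvc⟩ := hpow m (hv m)
      have hce : cv = c := huniq _ _ (by rw [← hcv, ← hvc])
      rw [hce]
      exact hc i
    have : cv i ∈ (⨅ m : ℕ, J₀ ^ m) := Submodule.mem_iInf _ |>.mpr hmem
    rw [hkrull] at this
    simpa using this
  have hcv0 : cv = 0 := Finsupp.ext hcoef
  rw [hcv, hcv0, Finsupp.sum_zero_index]
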